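/- Let μ be a finite positive Borel measure on a space X, let G : X → (-∞, 0] be a measurable function, and let λ > 1. Define ‖F‖_t² := ∫_X e^{-λ·max(G(x)-t, 0)} dμ(x) for t ∈ ℝ. Then limsup_{t → -∞} e^{-t}·‖F‖_t² ≤ (λ/(λ-1)) · limsup_{s → -∞} e^{-s}·μ({x : G(x) < s}). -/

import Mathlib

open Real MeasureTheory Filter Set Topology ENNReal

lemma lemA {a : ℝ} (ha : 0 < a) (m : ℝ) :
    ∫⁻ u in Set.Ioi m, ENNReal.ofReal (a * Real.exp (-(a * u))) =
      ENNReal.ofReal (Real.exp (-(a * m))) := by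
  have hint : IntegrableOn (fun u : ℝ => a * Real.exp (-(a * u))) (Set.Ioi m) := by
    have := (exp_neg_integrableOn_Ioi m ha).const_mul a
    simpa [mul_comm, neg_mul, IntegrableOn] using this
  have hval : ∫ u in Set.Ioi m, a * Real.exp (-(a * u)) = Real.exp (-(a * m)) := by
    have hderiv : ∀ x ∈ Set.Ici m, HasDerivAt (fun u : ℝ => -Real.exp (-(a * u)))
        (a * Real.exp (-(a * x))) x := by
      intro x _
      have h1 : HasDerivAt (fun u : ℝ => -(a * u)) (-a) x := by
        simpa using (hasDerivAt_id x).const_mul (-a)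
      have h2 := ((Real.hasDerivAt_exp (-(a * x))).comp x h1).neg
      exact h2.congr_deriv (by ring)
    have htend : Tendsto (fun u : ℝ => -Real.exp (-(a * u))) atTop (𝓝 0) := by
      rw [show (0:ℝ) = -0 by ring]
      refine Tendsto.neg ?_
      refine Real.tendsto_exp_atBot.comp ?_
      have : Tendsto (fun u : ℝ => a * u) atTop atTop :=
        Tendsto.const_mul_atTop ha tendsto_id
      exact tendsto_neg_atTop_atBot.comp this
    have := integral_Ioi_of_hasDerivAt_of_tendsto' hderiv hint htend
    simp only [zero_sub, neg_neg] at this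
    linarith [this]
  rw [← hval, ← ofReal_integral_eq_lintegral_ofReal hint]
  exact Filter.Eventually.of_forall fun u => by positivity

lemma lemC{X : Type*} [MeasurableSpace X] (μ : Measure X) [IsFiniteMeasure μ]
    (G : X → ℝ) (hG : Measurable G) {lam : ℝ} (hlam : 0 < lam) (t : ℝ) :
    ∫⁻ x, ENNReal.ofReal (Real.exp (-(lam * max (G x - t) 0))) ∂μ
      = ∫⁻ u in Set.Ioi (0:ℝ),
          ENNReal.ofReal (lam * Real.exp (-(lam * u))) * μ {x | G x < t + u} := by
  have h1 : ∀ x, ENNReal.ofReal (Real.exp (-(lam * max (G x - t) 0)))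
      = ∫⁻ u in Set.Ioi (0:ℝ),
          Set.indicator (Set.Ioi (G x - t))
            (fun u => ENNReal.ofReal (lam * Real.exp (-(lam * u)))) u := by
    intro x
    rw [lintegral_indicator measurableSet_Ioi, Measure.restrict_restrict measurableSet_Ioi,
      Set.Ioi_inter_Ioi, lemA hlam]
  simp_rw [h1]
  rw [lintegral_lintegral_swap]
  · refine setLIntegral_congr_fun measurableSet_Ioi (fun u hu => ?_)
    have h2 : ∀ x, Set.indicator (Set.Ioi (G x - t))
        (fun u => ENNReal.ofReal (lam * Real.exp (-(lam * u)))) u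
        = Set.indicator (G ⁻¹' Set.Iio (t + u))
            (fun _ => ENNReal.ofReal (lam * Real.exp (-(lam * u)))) x := by
      intro x
      by_cases h : G x < t + u <;>
        simp [Set.indicator_apply, Set.mem_Ioi, Set.mem_preimage, Set.mem_Iio,
          sub_lt_iff_lt_add', h]
    simp_rw [h2]
    rw [lintegral_indicator (hG measurableSet_Iio), setLIntegral_const]
    rfl
  · have hS : MeasurableSet {p : X × ℝ | G p.1 - t < p.2} :=
      measurableSet_lt ((hG.comp measurable_fst).sub measurable_const) measurable_snd
    have hg1 : Measurable fun u : ℝ => ENNReal.ofReal (lam * Real.exp (-(lam * u))) :=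
      ENNReal.measurable_ofReal.comp
        (measurable_const.mul (Real.measurable_exp.comp (measurable_id.const_mul lam).neg))
    have hg : Measurable fun p : X × ℝ => ENNReal.ofReal (lam * Real.exp (-(lam * p.2))) :=
      hg1.comp measurable_snd
    have : (Function.uncurry fun x u => Set.indicator (Set.Ioi (G x - t))
        (fun u => ENNReal.ofReal (lam * Real.exp (-(lam * u)))) u)
        = Set.indicator {p : X × ℝ | G p.1 - t < p.2}
            (fun p => ENNReal.ofReal (lam * Real.exp (-(lam * p.2)))) := by
      ext p
      simp [Function.uncurry, Set.indicator_apply, Set.mem_Ioi]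
    rw [this]
    exact (hg.indicator hS).aemeasurable

lemma lemKey{X : Type*} [MeasurableSpace X] (μ : Measure X) [IsFiniteMeasure μ]
    (G : X → ℝ) (hG : Measurable G) {lam : ℝ} (hlam : 1 < lam)
    {L' : ℝ≥0∞} {T t : ℝ}
    (hT : ∀ s, s ≤ T → ENNReal.ofReal (Real.exp (-s)) * μ {x | G x < s} ≤ L')
    (ht : t < T) :
    ENNReal.ofReal (Real.exp (-t)) *
        ∫⁻ x, ENNReal.ofReal (Real.exp (-(lam * max (G x - t) 0))) ∂μ
      ≤ ENNReal.ofReal (lam / (lam - 1)) * L' +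
        μ Set.univ * ENNReal.ofReal (Real.exp ((lam - 1) * t - lam * T)) := by
  have hlam0 : (0:ℝ) < lam := by linarith
  have hlam1 : (0:ℝ) < lam - 1 := by linarith
  rw [lemC μ G hG hlam0 t, ← lintegral_const_mul' _ _ ENNReal.ofReal_ne_top]
  have hbound : ∀ u ∈ Set.Ioi (0:ℝ),
      ENNReal.ofReal (Real.exp (-t)) *
          (ENNReal.ofReal (lam * Real.exp (-(lam * u))) * μ {x | G x < t + u})
        ≤ ENNReal.ofReal (lam * Real.exp (-((lam - 1) * u))) * L'
          + Set.indicator (Set.Ioi (T - t))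
              (fun u => ENNReal.ofReal (lam * Real.exp (-(lam * u))) *
                (ENNReal.ofReal (Real.exp (-t)) * μ Set.univ)) u := by
    intro u hu
    rcases le_or_gt (t + u) T with hcase | hcase
    · refine le_trans ?_ (le_add_right le_rfl)
      have e1 : ENNReal.ofReal (Real.exp (-t)) * ENNReal.ofReal (lam * Real.exp (-(lam * u)))
          = ENNReal.ofReal (lam * Real.exp (-((lam - 1) * u))) *
              ENNReal.ofReal (Real.exp (-(t + u))) := by
        rw [← ENNReal.ofReal_mul (by positivity), ← ENNReal.ofReal_mul (by positivity)]
        congr 1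
        rw [mul_left_comm, ← Real.exp_add, mul_assoc, ← Real.exp_add]
        congr 2
        ring
      rw [← mul_assoc, e1, mul_assoc]
      exact mul_le_mul_right (hT (t + u) hcase) _
    · refine le_trans ?_ (le_add_left le_rfl)
      rw [Set.indicator_of_mem (by simp only [Set.mem_Ioi]; linarith)]
      calc ENNReal.ofReal (Real.exp (-t)) *
              (ENNReal.ofReal (lam * Real.exp (-(lam * u))) * μ {x | G x < t + u})
          ≤ ENNReal.ofReal (Real.exp (-t)) *
              (ENNReal.ofReal (lam * Real.exp (-(lam * u))) * μ Set.univ) :=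
            mul_le_mul_right (mul_le_mul_right (measure_mono (Set.subset_univ _)) _) _
        _ = _ := by ring
  refine le_trans (setLIntegral_mono' measurableSet_Ioi hbound) ?_
  rw [lintegral_add_right']
  · gcongr
    · -- ∫ term1 ≤ C * L'
      rw [lintegral_mul_const'' _ ?hm]
      case hm =>
        exact (ENNReal.measurable_ofReal.comp
          (measurable_const.mul (Real.measurable_exp.comp
            (measurable_id.const_mul (lam-1)).neg))).aemeasurable
      have e2 : ∀ u : ℝ, ENNReal.ofReal (lam * Real.exp (-((lam - 1) * u)))
          = ENNReal.ofReal (lam / (lam - 1)) *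
              ENNReal.ofReal ((lam - 1) * Real.exp (-((lam - 1) * u))) := by
        intro u
        rw [← ENNReal.ofReal_mul (by positivity)]
        congr 1
        field_simp
      simp_rw [e2]
      rw [lintegral_const_mul' _ _ ENNReal.ofReal_ne_top, lemA hlam1 0]
      simp [Real.exp_zero]
    · -- tail term
      rw [lintegral_indicator measurableSet_Ioi, Measure.restrict_restrict measurableSet_Ioi,
        Set.Ioi_inter_Ioi, max_eq_left (by linarith : (0:ℝ) ≤ T - t),
        lintegral_mul_const' _ _ (by finiteness), lemA hlam0 (T - t)]
      rw [← mul_assoc, ← ENNReal.ofReal_mul (Real.exp_nonneg _), ← Real.exp_add, mul_comm]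
      refine le_of_eq ?_
      congr 2
      ring
  · have hg1 : Measurable fun u : ℝ => ENNReal.ofReal (lam * Real.exp (-(lam * u))) :=
      (measurable_const.mul (((measurable_id.const_mul lam).neg).exp)).ennreal_ofReal
    exact ((hg1.mul_const _).indicator measurableSet_Ioi).aemeasurable

theorem stmt2 {X : Type*} [MeasurableSpace X] (μ : Measure X) [IsFiniteMeasure μ]
    (G : X → ℝ) (hG : Measurable G) (hG0 : ∀ x, G x ≤ 0)
    (lam : ℝ) (hlam : 1 < lam) :
    Filter.limsup
        (fun t : ℝ => ENNReal.ofReal (Real.exp (-t)) *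
          ∫⁻ x, ENNReal.ofReal (Real.exp (-(lam * max (G x - t) 0))) ∂μ)
        Filter.atBot
      ≤ ENNReal.ofReal (lam / (lam - 1)) *
        Filter.limsup
          (fun s : ℝ => ENNReal.ofReal (Real.exp (-s)) * μ {x | G x < s})
          Filter.atBot := by
  have hlam1 : (0:ℝ) < lam - 1 := by linarith
  set C : ℝ≥0∞ := ENNReal.ofReal (lam / (lam - 1)) with hC
  set L : ℝ≥0∞ := Filter.limsup
      (fun s : ℝ => ENNReal.ofReal (Real.exp (-s)) * μ {x | G x < s}) Filter.atBot with hLdef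
  have hC0 : C ≠ 0 := by
    rw [hC, Ne, ENNReal.ofReal_eq_zero, not_le]
    positivity
  have hCtop : C ≠ ⊤ := ENNReal.ofReal_ne_top
  by_cases hL : L = ⊤
  · rw [hL, ENNReal.mul_top hC0]
    exact le_top
  refine ENNReal.le_of_forall_pos_le_add fun ε hε hfin => ?_
  set ε2 : ℝ≥0∞ := (ε : ℝ≥0∞) / 2 with hε2
  have hε2pos : (0:ℝ≥0∞) < ε2 := by
    rw [hε2]
    exact ENNReal.div_pos (by exact_mod_cast hε.ne') (by norm_num)
  set δ : ℝ≥0∞ := ε2 / C with hδ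
  have hδ0 : δ ≠ 0 := by
    rw [hδ, Ne, ENNReal.div_eq_zero_iff]
    push_neg
    exact ⟨hε2pos.ne', hCtop⟩
  have hL' : L < L + δ := ENNReal.lt_add_right hL hδ0
  have hCL' : C * (L + δ) = C * L + ε2 := by
    rw [mul_add, hδ, ENNReal.mul_div_cancel hC0 hCtop]
  have hev : ∀ᶠ s in Filter.atBot,
      ENNReal.ofReal (Real.exp (-s)) * μ {x | G x < s} < L + δ :=
    Filter.eventually_lt_of_limsup_lt hL'
  obtain ⟨T, hT⟩ := Filter.eventually_atBot.mp hev
  have htail : Filter.Tendsto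
      (fun t : ℝ => μ Set.univ * ENNReal.ofReal (Real.exp ((lam - 1) * t - lam * T)))
      Filter.atBot (nhds 0) := by
    have h1 : Filter.Tendsto (fun t : ℝ => (lam - 1) * t - lam * T) Filter.atBot Filter.atBot := by
      refine Filter.tendsto_atBot_add_const_right _ _ ?_
      exact (tendsto_const_mul_atBot_of_pos hlam1).mpr Filter.tendsto_id
    have h2 : Filter.Tendsto (fun t : ℝ => Real.exp ((lam - 1) * t - lam * T))
        Filter.atBot (nhds 0) := Real.tendsto_exp_atBot.comp h1
    have h3 : Filter.Tendsto (fun t : ℝ => ENNReal.ofReal (Real.exp ((lam - 1) * t - lam * T)))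
        Filter.atBot (nhds 0) := by
      have := (ENNReal.continuous_ofReal.tendsto 0).comp h2
      simpa [Function.comp_def] using this
    have := ENNReal.Tendsto.const_mul h3 (Or.inr (measure_ne_top μ Set.univ))
    simpa using this
  have htail2 : ∀ᶠ t in Filter.atBot,
      μ Set.univ * ENNReal.ofReal (Real.exp ((lam - 1) * t - lam * T)) < ε2 :=
    htail.eventually (Iio_mem_nhds hε2pos)
  have hev2 : ∀ᶠ t in Filter.atBot,
      ENNReal.ofReal (Real.exp (-t)) *
          ∫⁻ x, ENNReal.ofReal (Real.exp (-(lam * max (G x - t) 0))) ∂μ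
        ≤ C * L + ε := by
    filter_upwards [htail2, Filter.eventually_lt_atBot T] with t h1 h2
    calc ENNReal.ofReal (Real.exp (-t)) *
            ∫⁻ x, ENNReal.ofReal (Real.exp (-(lam * max (G x - t) 0))) ∂μ
        ≤ C * (L + δ) + μ Set.univ * ENNReal.ofReal (Real.exp ((lam - 1) * t - lam * T)) :=
          lemKey μ G hG hlam (fun s hs => (hT s hs).le) h2
      _ ≤ (C * L + ε2) + ε2 := by
          rw [hCL']
          exact add_le_add le_rfl h1.le
      _ = C * L + ε := by rw [add_assoc, hε2, ENNReal.add_halves]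
  exact Filter.limsup_le_of_le (by isBoundedDefault) hev2
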